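/- Let L be a locally finite distributive lattice with least element 0̂. If S is a finite order ideal of the poset of join-irreducible elements of L, and x = ⨆ S, then the set of join-irreducible elements of L that are ≤ x equals S. -/
import Mathlib


/-- `j` is join-irreducible: it is not the least upper bound of any finite set of
strictly smaller elements (in particular a least element, being the empty join,
is not join-irreducible). -/
def JoinIrred {α : Type*} [PartialOrder α] (j : α) : Prop :=
  ¬ ∃ s : Finset α, (∀ a ∈ s, a < j) ∧ IsLUB (↑s : Set α) j

/-- In a locally finite distributive lattice with least element, if `S` is a finite
order ideal of join-irreducibles with join `x`, then the join-irreducibles below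
`x` are exactly `S`. -/
theorem joinIrreds_below_sup_eq {α : Type*} [DistribLattice α] [OrderBot α]
    (hlf : ∀ a b : α, (Set.Icc a b).Finite)
    (S : Set α) (hfin : S.Finite) (hirr : ∀ j ∈ S, JoinIrred j)
    (hlow : ∀ p q : α, JoinIrred p → q ∈ S → p ≤ q → p ∈ S)
    (x : α) (hx : IsLUB S x) :
    {j | JoinIrred j ∧ j ≤ x} = S := by
  ext j
  simp only [Set.mem_setOf_eq]
  constructor
  · rintro ⟨hj, hjx⟩
    set F := hfin.toFinset with hF
    have hFS : ↑F = S := hfin.coe_toFinset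
    -- x equals the finset sup of F
    have hxF : x = F.sup id := by
      apply le_antisymm
      · exact hx.2 fun a ha => by
          simpa using Finset.le_sup (f := id) (hfin.mem_toFinset.mpr ha)
      · exact Finset.sup_le fun a ha => hx.1 (hfin.mem_toFinset.mp ha)
    have hj_eq : j = F.sup fun s => j ⊓ s := by
      have := Finset.sup_inf_distrib_left F id j
      rw [← hxF] at this
      simpa [inf_eq_left.mpr hjx] using this
    -- find s ∈ S with j ≤ s
    by_contra hjS
    classical
    have hlt : ∀ s ∈ F, j ⊓ s < j := by
      intro s hs
      refine lt_of_le_of_ne inf_le_left fun h => ?_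
      exact hjS (hlow j s hj (hfin.mem_toFinset.mp hs) (inf_eq_left.mp h))
    apply hj
    refine ⟨F.image fun s => j ⊓ s, ?_, ?_, ?_⟩
    · intro a ha
      rcases Finset.mem_image.mp ha with ⟨s, hs, rfl⟩
      exact hlt s hs
    · intro a ha
      rcases Finset.mem_coe.mp ha with ha
      rcases Finset.mem_image.mp ha with ⟨s, hs, rfl⟩
      exact inf_le_left
    · intro u hu
      conv_lhs => rw [hj_eq]
      refine Finset.sup_le fun s hs => hu ?_
      exact Finset.mem_coe.mpr (Finset.mem_image.mpr ⟨s, hs, rfl⟩)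
  · intro hjS
    exact ⟨hirr j hjS, hx.1 hjS⟩
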